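/- Let 𝒜 be a strong T₀-family and r ∈ ℝ. If {x_ξ : ξ < ω₁} ⊆ c_00(ω₁) consists of vectors with pairwise disjoint supports and ‖x_ξ‖_𝒜 = r for all ξ, then there exist ξ < η with ‖x_ξ − x_η‖_𝒜 = √2·r, and there exist ξ < η with ‖x_ξ − x_η‖_𝒜 = r. -/

import Mathlib

noncomputable section

/-- The set `ω₁` of countable ordinals, as a type. -/
abbrev Omega1 : Type := Ordinal.ToType (Ordinal.omega 1)

/-- `‖x‖_𝒜 = sup_{A ∈ 𝒜} sqrt (Σ_{α ∈ A} x(α)²)`. -/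
def normA (𝒜 : Set (Finset Omega1)) (x : Omega1 → ℝ) : ℝ :=
  sSup {r : ℝ | ∃ A ∈ 𝒜, r = Real.sqrt (∑ α ∈ A, (x α) ^ 2)}

/-- The supremum norm of `x`. -/
def supNorm (x : Omega1 → ℝ) : ℝ :=
  sSup {r : ℝ | ∃ α : Omega1, r = |x α|}

/-- The ℓ₂ norm of a (finitely supported) `x`. -/
def l2Norm (x : Omega1 → ℝ) : ℝ :=
  Real.sqrt (∑ᶠ α : Omega1, (x α) ^ 2)

/-- `𝒜` is a family of finite subsets of `ω₁` closed under subsets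
and containing all singletons. -/
def IsGoodFamily (𝒜 : Set (Finset Omega1)) : Prop :=
  (∀ A ∈ 𝒜, ∀ B : Finset Omega1, B ⊆ A → B ∈ 𝒜) ∧
    ∀ α : Omega1, ({α} : Finset Omega1) ∈ 𝒜

/-- `𝒜` is a strong T₀-family. -/
def IsStrongT0Family (𝒜 : Set (Finset Omega1)) : Prop :=
  (∀ A ∈ 𝒜, ∀ B : Finset Omega1, B ⊆ A → B ∈ 𝒜) ∧
  (∀ α : Omega1, ({α} : Finset Omega1) ∈ 𝒜) ∧
  (∀ F : Omega1 → Finset Omega1, Function.Injective F →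
    (∀ ξ η : Omega1, ξ ≠ η → Disjoint (F ξ) (F η)) →
    ((∃ ξ η : Omega1, ξ ≠ η ∧
        ∀ α ∈ F ξ, ∀ β ∈ F η, ({α, β} : Finset Omega1) ∉ 𝒜) ∧
     (∃ ξ η : Omega1, ξ ≠ η ∧
        ∀ α ∈ F ξ, ∀ β ∈ F η, ({α, β} : Finset Omega1) ∈ 𝒜))) ∧
  (∀ C : Finset Omega1,
    (∀ α ∈ C, ∀ β ∈ C, α ≠ β → ({α, β} : Finset Omega1) ∈ 𝒜) → C ∈ 𝒜)

instance : Nonempty Omega1 := by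
  rw [Ordinal.toType_nonempty_iff_ne_zero]
  exact (Ordinal.omega_pos 1).ne'

namespace T0Aux

variable {𝒜 : Set (Finset Omega1)}

lemma sum_sq_restrict (y : Omega1 → ℝ) (s : Finset Omega1)
    (hs : Function.support y ⊆ ↑s) (A : Finset Omega1) :
    ∑ α ∈ A, y α ^ 2 = ∑ α ∈ A ∩ s, y α ^ 2 := by
  refine (Finset.sum_subset Finset.inter_subset_left ?_).symm
  intro α hA hα
  have h1 : α ∉ s := fun h => hα (Finset.mem_inter.2 ⟨hA, h⟩)
  have h2 : y α = 0 := by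
    by_contra h; exact h1 (hs h)
  simp [h2]

lemma bddAbove_set (y : Omega1 → ℝ) (s : Finset Omega1)
    (hs : Function.support y ⊆ ↑s) :
    BddAbove {r : ℝ | ∃ A ∈ 𝒜, r = Real.sqrt (∑ α ∈ A, (y α) ^ 2)} := by
  refine ⟨Real.sqrt (∑ α ∈ s, y α ^ 2), ?_⟩
  rintro t ⟨A, hA, rfl⟩
  rw [sum_sq_restrict y s hs A]
  exact Real.sqrt_le_sqrt (Finset.sum_le_sum_of_subset_of_nonneg
    Finset.inter_subset_right (fun i _ _ => sq_nonneg _))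

lemma set_nonempty (hE : (∅ : Finset Omega1) ∈ 𝒜) (y : Omega1 → ℝ) :
    {r : ℝ | ∃ A ∈ 𝒜, r = Real.sqrt (∑ α ∈ A, (y α) ^ 2)}.Nonempty :=
  ⟨_, ∅, hE, rfl⟩

/-- the sup is attained on a subset of the support -/
lemma exists_max (hclosed : ∀ A ∈ 𝒜, ∀ B : Finset Omega1, B ⊆ A → B ∈ 𝒜)
    (hE : (∅ : Finset Omega1) ∈ 𝒜)
    (y : Omega1 → ℝ) (s : Finset Omega1) (hs : Function.support y ⊆ ↑s) :
    ∃ A ∈ 𝒜, A ⊆ s ∧ Real.sqrt (∑ α ∈ A, y α ^ 2) = normA 𝒜 y := by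
  set S : Set ℝ := {r : ℝ | ∃ A ∈ 𝒜, r = Real.sqrt (∑ α ∈ A, (y α) ^ 2)} with hS
  have hfin : S.Finite := by
    have : S ⊆ (fun A : Finset Omega1 => Real.sqrt (∑ α ∈ A, y α ^ 2)) ''
        ↑(s.powerset) := by
      rintro t ⟨A, hA, rfl⟩
      exact ⟨A ∩ s, by simp [Finset.mem_powerset],
        (congrArg Real.sqrt (sum_sq_restrict y s hs A)).symm⟩
    exact Set.Finite.subset ((s.powerset.finite_toSet).image _) this
  have hmem : sSup S ∈ S := (set_nonempty hE y).csSup_mem hfin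
  obtain ⟨A, hA, hAeq⟩ := hmem
  refine ⟨A ∩ s, hclosed A hA _ Finset.inter_subset_left, Finset.inter_subset_right, ?_⟩
  rw [← sum_sq_restrict y s hs A, normA, ← hS, ← hAeq]

lemma le_normA (y : Omega1 → ℝ) (s : Finset Omega1) (hs : Function.support y ⊆ ↑s)
    (A : Finset Omega1) (hA : A ∈ 𝒜) :
    Real.sqrt (∑ α ∈ A, y α ^ 2) ≤ normA 𝒜 y :=
  le_csSup (bddAbove_set y s hs) ⟨A, hA, rfl⟩

lemma normA_neg (y : Omega1 → ℝ) : normA 𝒜 (-y) = normA 𝒜 y := by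
  unfold normA
  congr 1
  ext t
  simp [neg_sq]

lemma normA_of_zero (hE : (∅ : Finset Omega1) ∈ 𝒜) (y : Omega1 → ℝ)
    (hy : ∀ α, y α = 0) : normA 𝒜 y = 0 := by
  have : {r : ℝ | ∃ A ∈ 𝒜, r = Real.sqrt (∑ α ∈ A, (y α) ^ 2)} = {0} := by
    ext t
    simp only [Set.mem_setOf_eq, Set.mem_singleton_iff]
    constructor
    · rintro ⟨A, hA, rfl⟩; simp [hy]
    · rintro rfl; exact ⟨∅, hE, by simp⟩
  rw [normA, this, csSup_singleton]

/-- pointwise splitting of the square of a difference for disjointly supported functions -/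
lemma sq_sub (y z : Omega1 → ℝ)
    (hd : Disjoint (Function.support y) (Function.support z)) (α : Omega1) :
    (y α - z α) ^ 2 = y α ^ 2 + z α ^ 2 := by
  have h : y α * z α = 0 := by
    by_contra h
    have hy : y α ≠ 0 := fun h0 => h (by rw [h0]; ring)
    have hz : z α ≠ 0 := fun h0 => h (by rw [h0]; ring)
    exact (Set.disjoint_left.1 hd) hy hz
  rw [sub_sq, mul_assoc, h]; ring

lemma sum_sq_sub (y z : Omega1 → ℝ)
    (hd : Disjoint (Function.support y) (Function.support z)) (A : Finset Omega1) :
    ∑ α ∈ A, (y α - z α) ^ 2 = (∑ α ∈ A, y α ^ 2) + ∑ α ∈ A, z α ^ 2 := by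
  rw [← Finset.sum_add_distrib]
  exact Finset.sum_congr rfl fun α _ => sq_sub y z hd α

lemma support_sub (y z : Omega1 → ℝ) :
    Function.support (y - z) ⊆ Function.support y ∪ Function.support z := by
  intro α hα
  by_contra h
  rw [Set.mem_union] at h
  push_neg at h
  have hy : y α = 0 := Function.notMem_support.1 h.1
  have hz : z α = 0 := Function.notMem_support.1 h.2
  exact hα (by simp [Pi.sub_apply, hy, hz])

lemma sum_le_sq (y : Omega1 → ℝ) (s : Finset Omega1) (hs : Function.support y ⊆ ↑s)
    (r : ℝ) (hn : normA 𝒜 y = r) (A : Finset Omega1) (hA : A ∈ 𝒜) :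
    ∑ α ∈ A, y α ^ 2 ≤ r ^ 2 := by
  have h1 : Real.sqrt (∑ α ∈ A, y α ^ 2) ≤ r := hn ▸ le_normA y s hs A hA
  have h2 : (0:ℝ) ≤ ∑ α ∈ A, y α ^ 2 := Finset.sum_nonneg fun _ _ => sq_nonneg _
  calc ∑ α ∈ A, y α ^ 2 = (Real.sqrt (∑ α ∈ A, y α ^ 2)) ^ 2 := (Real.sq_sqrt h2).symm
    _ ≤ r ^ 2 := pow_le_pow_left₀ (Real.sqrt_nonneg _) h1 2

/-- the good case: all cross pairs are in 𝒜 -/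
lemma good_case (hclosed : ∀ A ∈ 𝒜, ∀ B : Finset Omega1, B ⊆ A → B ∈ 𝒜)
    (hC : ∀ C : Finset Omega1,
      (∀ α ∈ C, ∀ β ∈ C, α ≠ β → ({α, β} : Finset Omega1) ∈ 𝒜) → C ∈ 𝒜)
    (hE : (∅ : Finset Omega1) ∈ 𝒜)
    (y z : Omega1 → ℝ) (s t : Finset Omega1)
    (hys : ↑s = Function.support y) (hzt : ↑t = Function.support z)
    (hd : Disjoint (Function.support y) (Function.support z))
    (hgood : ∀ α ∈ s, ∀ β ∈ t, ({α, β} : Finset Omega1) ∈ 𝒜)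
    (r : ℝ) (hr : 0 ≤ r) (hy : normA 𝒜 y = r) (hz : normA 𝒜 z = r) :
    normA 𝒜 (y - z) = Real.sqrt 2 * r := by
  have hssub : Function.support y ⊆ ↑s := hys.ge
  have htsub : Function.support z ⊆ ↑t := hzt.ge
  have hsubsub : Function.support (y - z) ⊆ ↑(s ∪ t) := by
    refine (support_sub y z).trans ?_
    rw [Finset.coe_union, hys, hzt]
  have hval : Real.sqrt 2 * r = Real.sqrt (r ^ 2 + r ^ 2) := by
    rw [show r ^ 2 + r ^ 2 = 2 * r ^ 2 by ring, Real.sqrt_mul (by norm_num),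
      Real.sqrt_sq hr]
  apply le_antisymm
  · -- upper bound
    apply csSup_le (set_nonempty hE _)
    rintro u ⟨A, hA, rfl⟩
    have : (y - z) = fun α => y α - z α := rfl
    rw [hval]
    simp only [Pi.sub_apply]
    rw [sum_sq_sub y z hd A]
    exact Real.sqrt_le_sqrt (add_le_add (sum_le_sq y s hssub r hy A hA)
      (sum_le_sq z t htsub r hz A hA))
  · -- lower bound: use witnesses
    obtain ⟨A, hA, hAs, hAval⟩ := exists_max hclosed hE y s hssub
    obtain ⟨B, hB, hBt, hBval⟩ := exists_max hclosed hE z t htsub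
    have hst : Disjoint s t := by
      rw [← Finset.disjoint_coe, hys, hzt]; exact hd
    have hAB : Disjoint A B := hst.mono hAs hBt
    have hCmem : A ∪ B ∈ 𝒜 := by
      apply hC
      intro α hα β hβ hne
      rw [Finset.mem_union] at hα hβ
      rcases hα with hα | hα <;> rcases hβ with hβ | hβ
      · exact hclosed A hA _ (by intro γ hγ; simp at hγ; rcases hγ with rfl | rfl <;> assumption)
      · exact hgood α (hAs hα) β (hBt hβ)
      · rw [Finset.pair_comm]; exact hgood β (hAs hβ) α (hBt hα)
      · exact hclosed B hB _ (by intro γ hγ; simp at hγ; rcases hγ with rfl | rfl <;> assumption)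
    -- value on A ∪ B
    have hzA : ∀ α ∈ A, z α = 0 := by
      intro α hα
      by_contra h
      exact Set.disjoint_left.1 hd (hys ▸ hAs hα) (Function.mem_support.2 h)
    have hyB : ∀ β ∈ B, y β = 0 := by
      intro β hβ
      by_contra h
      exact Set.disjoint_right.1 hd (hzt ▸ hBt hβ) (Function.mem_support.2 h)
    have hsumy : ∑ α ∈ A ∪ B, y α ^ 2 = ∑ α ∈ A, y α ^ 2 := by
      refine (Finset.sum_subset Finset.subset_union_left ?_).symm
      intro α hα hαA
      have hB' : α ∈ B := by
        rcases Finset.mem_union.1 hα with h | h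
        · exact absurd h hαA
        · exact h
      simp [hyB α hB']
    have hsumz : ∑ α ∈ A ∪ B, z α ^ 2 = ∑ α ∈ B, z α ^ 2 := by
      refine (Finset.sum_subset Finset.subset_union_right ?_).symm
      intro α hα hαB
      have : α ∈ A := by
        rcases Finset.mem_union.1 hα with h | h
        · exact h
        · exact absurd h hαB
      simp [hzA α this]
    have hsqA : ∑ α ∈ A, y α ^ 2 = r ^ 2 := by
      have h2 : (0:ℝ) ≤ ∑ α ∈ A, y α ^ 2 := Finset.sum_nonneg fun _ _ => sq_nonneg _
      have := hAval.symm ▸ hy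
      calc ∑ α ∈ A, y α ^ 2 = (Real.sqrt (∑ α ∈ A, y α ^ 2)) ^ 2 := (Real.sq_sqrt h2).symm
        _ = r ^ 2 := by rw [hAval, hy]
    have hsqB : ∑ α ∈ B, z α ^ 2 = r ^ 2 := by
      have h2 : (0:ℝ) ≤ ∑ α ∈ B, z α ^ 2 := Finset.sum_nonneg fun _ _ => sq_nonneg _
      calc ∑ α ∈ B, z α ^ 2 = (Real.sqrt (∑ α ∈ B, z α ^ 2)) ^ 2 := (Real.sq_sqrt h2).symm
        _ = r ^ 2 := by rw [hBval, hz]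
    have key : Real.sqrt (∑ α ∈ A ∪ B, ((y - z) α) ^ 2) = Real.sqrt 2 * r := by
      simp only [Pi.sub_apply]
      rw [sum_sq_sub y z hd, hsumy, hsumz, hsqA, hsqB, hval]
    rw [← key]
    exact le_normA (y - z) (s ∪ t) hsubsub (A ∪ B) hCmem

/-- the bad case: no cross pair is in 𝒜 -/
lemma bad_case (hclosed : ∀ A ∈ 𝒜, ∀ B : Finset Omega1, B ⊆ A → B ∈ 𝒜)
    (hE : (∅ : Finset Omega1) ∈ 𝒜)
    (y z : Omega1 → ℝ) (s t : Finset Omega1)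
    (hys : ↑s = Function.support y) (hzt : ↑t = Function.support z)
    (hd : Disjoint (Function.support y) (Function.support z))
    (hbad : ∀ α ∈ s, ∀ β ∈ t, ({α, β} : Finset Omega1) ∉ 𝒜)
    (r : ℝ) (hr : 0 ≤ r) (hy : normA 𝒜 y = r) (hz : normA 𝒜 z = r) :
    normA 𝒜 (y - z) = r := by
  have hssub : Function.support y ⊆ ↑s := hys.ge
  have htsub : Function.support z ⊆ ↑t := hzt.ge
  have hsubsub : Function.support (y - z) ⊆ ↑(s ∪ t) := by
    refine (support_sub y z).trans ?_
    rw [Finset.coe_union, hys, hzt]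
  apply le_antisymm
  · apply csSup_le (set_nonempty hE _)
    rintro u ⟨A, hA, rfl⟩
    simp only [Pi.sub_apply]
    rw [sum_sq_sub y z hd A]
    -- one of the two sums is zero
    have hcases : (∑ α ∈ A, y α ^ 2) = 0 ∨ (∑ α ∈ A, z α ^ 2) = 0 := by
      by_contra h
      push_neg at h
      obtain ⟨h1, h2⟩ := h
      obtain ⟨α, hαA, hα⟩ := Finset.exists_ne_zero_of_sum_ne_zero h1
      obtain ⟨β, hβA, hβ⟩ := Finset.exists_ne_zero_of_sum_ne_zero h2
      have hyα : y α ≠ 0 := fun h0 => hα (by simp [h0])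
      have hzβ : z β ≠ 0 := fun h0 => hβ (by simp [h0])
      have hαs : α ∈ s := by
        rw [← Finset.mem_coe, hys]; exact Function.mem_support.2 hyα
      have hβt : β ∈ t := by
        rw [← Finset.mem_coe, hzt]; exact Function.mem_support.2 hzβ
      have hmem : ({α, β} : Finset Omega1) ∈ 𝒜 := by
        apply hclosed A hA
        intro γ hγ
        simp at hγ
        rcases hγ with rfl | rfl <;> assumption
      exact hbad α hαs β hβt hmem
    rcases hcases with h0 | h0
    · rw [h0, zero_add]
      exact hz ▸ le_normA z t htsub A hA
    · rw [h0, add_zero]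
      exact hy ▸ le_normA y s hssub A hA
  · obtain ⟨A, hA, hAs, hAval⟩ := exists_max hclosed hE y s hssub
    have hzA : ∀ α ∈ A, z α = 0 := by
      intro α hα
      by_contra h
      exact Set.disjoint_left.1 hd (hys ▸ hAs hα) (Function.mem_support.2 h)
    have key : Real.sqrt (∑ α ∈ A, ((y - z) α) ^ 2) = r := by
      simp only [Pi.sub_apply]
      rw [sum_sq_sub y z hd]
      have : ∑ α ∈ A, z α ^ 2 = 0 := Finset.sum_eq_zero fun α hα => by simp [hzA α hα]
      rw [this, add_zero, hAval, hy]
    rw [← key]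
    exact le_normA (y - z) (s ∪ t) hsubsub A hA

end T0Aux

open T0Aux

/-- for disjointly supported finitely supported vectors of
constant `𝒜`-norm `r`, some pair is at distance `√2·r` and some pair at distance `r`. -/
theorem stmt10 (𝒜 : Set (Finset Omega1)) (h𝒜 : IsStrongT0Family 𝒜) (r : ℝ)
    (x : Omega1 → Omega1 → ℝ)
    (hfin : ∀ ξ, (Function.support (x ξ)).Finite)
    (hdisj : ∀ ξ η : Omega1, ξ ≠ η →
      Disjoint (Function.support (x ξ)) (Function.support (x η)))
    (hnorm : ∀ ξ, normA 𝒜 (x ξ) = r) :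
    (∃ ξ η : Omega1, ξ < η ∧ normA 𝒜 (x ξ - x η) = Real.sqrt 2 * r) ∧
    (∃ ξ η : Omega1, ξ < η ∧ normA 𝒜 (x ξ - x η) = r) := by
  obtain ⟨hclosed, hsingle, hT0, hC⟩ := h𝒜
  have hE : (∅ : Finset Omega1) ∈ 𝒜 :=
    hclosed _ (hsingle (Classical.arbitrary _)) ∅ (Finset.empty_subset _)
  set s : Omega1 → Finset Omega1 := fun ξ => (hfin ξ).toFinset with hs
  have hscoe : ∀ ξ, ↑(s ξ) = Function.support (x ξ) := fun ξ => (hfin ξ).coe_toFinset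
  have hr0 : 0 ≤ r := by
    have h := le_normA (𝒜 := 𝒜) (x (Classical.arbitrary _)) (s _)
      (hscoe _).ge ∅ hE
    rw [hnorm] at h
    simpa using h
  by_cases hr : r = 0
  · -- degenerate: all vectors are zero
    subst hr
    have hzero : ∀ ξ α, x ξ α = 0 := by
      intro ξ α
      have h := le_normA (𝒜 := 𝒜) (x ξ) (s ξ) (hscoe ξ).ge {α} (hsingle α)
      rw [hnorm] at h
      simp only [Finset.sum_singleton] at h
      rw [Real.sqrt_sq_eq_abs] at h
      exact abs_nonpos_iff.1 h
    obtain ⟨⟨ξ, η, hne, -⟩, -⟩ := hT0 (fun ξ => {ξ}) (fun a b h => by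
        simpa using h) (fun a b h => Finset.disjoint_singleton.2 h)
    have hzz : ∀ ξ η : Omega1, normA 𝒜 (x ξ - x η) = 0 := fun ξ η =>
      normA_of_zero hE _ (fun α => by simp [hzero])
    rcases hne.lt_or_gt with h | h
    · exact ⟨⟨ξ, η, h, by rw [hzz, mul_zero]⟩, ⟨ξ, η, h, hzz ξ η⟩⟩
    · exact ⟨⟨η, ξ, h, by rw [hzz, mul_zero]⟩, ⟨η, ξ, h, hzz η ξ⟩⟩
  · -- r > 0 : supports are nonempty
    have hrpos : 0 < r := lt_of_le_of_ne hr0 (Ne.symm hr)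
    have hsne : ∀ ξ, (s ξ).Nonempty := by
      intro ξ
      rw [Finset.nonempty_iff_ne_empty]
      intro h0
      have hsupp : Function.support (x ξ) = ∅ := by
        rw [← hscoe ξ, h0, Finset.coe_empty]
      have : normA 𝒜 (x ξ) = 0 := by
        apply normA_of_zero hE
        intro α
        by_contra h
        exact (Set.eq_empty_iff_forall_notMem.1 hsupp α) (Function.mem_support.2 h)
      rw [hnorm] at this
      exact hr this
    have hFd : ∀ ξ η : Omega1, ξ ≠ η → Disjoint (s ξ) (s η) := by
      intro ξ η h
      rw [← Finset.disjoint_coe, hscoe, hscoe]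
      exact hdisj ξ η h
    have hFinj : Function.Injective s := by
      intro ξ η h
      by_contra hne
      have hd := hFd ξ η hne
      rw [h] at hd
      exact Finset.Nonempty.ne_empty (hsne η) ((Finset.disjoint_self_iff_empty _).1 hd)
    obtain ⟨⟨ξ₁, η₁, hne₁, hbad⟩, ⟨ξ₂, η₂, hne₂, hgood⟩⟩ := hT0 s hFinj hFd
    constructor
    · -- √2 case
      have hv : normA 𝒜 (x ξ₂ - x η₂) = Real.sqrt 2 * r :=
        good_case hclosed hC hE (x ξ₂) (x η₂) (s ξ₂) (s η₂) (hscoe ξ₂) (hscoe η₂)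
          (hdisj ξ₂ η₂ hne₂) hgood r hr0 (hnorm ξ₂) (hnorm η₂)
      rcases hne₂.lt_or_gt with h | h
      · exact ⟨ξ₂, η₂, h, hv⟩
      · refine ⟨η₂, ξ₂, h, ?_⟩
        rw [show x η₂ - x ξ₂ = -(x ξ₂ - x η₂) from (neg_sub _ _).symm, normA_neg]
        exact hv
    · -- r case
      have hv : normA 𝒜 (x ξ₁ - x η₁) = r :=
        bad_case hclosed hE (x ξ₁) (x η₁) (s ξ₁) (s η₁) (hscoe ξ₁) (hscoe η₁)
          (hdisj ξ₁ η₁ hne₁) hbad r hr0 (hnorm ξ₁) (hnorm η₁)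
      rcases hne₁.lt_or_gt with h | h
      · exact ⟨ξ₁, η₁, h, hv⟩
      · refine ⟨η₁, ξ₁, h, ?_⟩
        rw [show x η₁ - x ξ₁ = -(x ξ₁ - x η₁) from (neg_sub _ _).symm, normA_neg]
        exact hv
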